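/- The subspace 𝔰𝔲_{𝔩0}(2^n) = span{c⊗σz : c ∈ su(2^{n−1})} and 𝔰𝔲_{𝔩1}(2^n) = span{d⊗I, i·z_n : d ∈ su(2^{n−1})} satisfy: 𝔰𝔲_{𝔩1} is a subalgebra, [𝔰𝔲_{𝔩0}, 𝔰𝔲_{𝔩1}] ⊆ 𝔰𝔲_{𝔩0}, and [𝔰𝔲_{𝔩0}, 𝔰𝔲_{𝔩0}] ⊆ 𝔰𝔲_{𝔩1}. -/
import Mathlib

open Matrix Complex
open scoped Kronecker

/-- The 2×2 Pauli matrices. -/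
noncomputable def σx : Matrix (Fin 2) (Fin 2) ℂ := !![0, 1; 1, 0]
noncomputable def σy : Matrix (Fin 2) (Fin 2) ℂ := !![0, -I; I, 0]
noncomputable def σz : Matrix (Fin 2) (Fin 2) ℂ := !![1, 0; 0, -1]

/-- `su ι`: traceless skew-Hermitian complex matrices indexed by `ι`. -/
def su (ι : Type*) [Fintype ι] [DecidableEq ι] : Set (Matrix ι ι ℂ) :=
  {A | Aᴴ = -A ∧ A.trace = 0}

lemma su_comm {ι : Type*} [Fintype ι] [DecidableEq ι] {c d : Matrix ι ι ℂ}
    (hc : c ∈ su ι) (hd : d ∈ su ι) : c * d - d * c ∈ su ι := by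
  obtain ⟨hc1, hc2⟩ := hc
  obtain ⟨hd1, hd2⟩ := hd
  constructor
  · simp [Matrix.conjTranspose_mul, hc1, hd1, neg_sub]
  · simp [Matrix.trace_mul_comm c d]

lemma comm_span {N : Type*} [Fintype N] [DecidableEq N]
    (s t : Set (Matrix N N ℂ)) (p : Submodule ℝ (Matrix N N ℂ))
    (h : ∀ a ∈ s, ∀ b ∈ t, a * b - b * a ∈ p) :
    ∀ A ∈ Submodule.span ℝ s, ∀ B ∈ Submodule.span ℝ t, A * B - B * A ∈ p := by
  intro A hA
  induction hA using Submodule.span_induction with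
  | mem a ha =>
    intro B hB
    induction hB using Submodule.span_induction with
    | mem b hb => exact h a ha b hb
    | zero => simpa using p.zero_mem
    | add x y hx hy ihx ihy =>
      have : a * (x + y) - (x + y) * a = (a * x - x * a) + (a * y - y * a) := by
        noncomm_ring
      rw [this]; exact p.add_mem ihx ihy
    | smul r x hx ihx =>
      have : a * (r • x) - (r • x) * a = r • (a * x - x * a) := by
        rw [mul_smul_comm, smul_mul_assoc, smul_sub]
      rw [this]; exact p.smul_mem r ihx
  | zero => intro B hB; simpa using p.zero_mem
  | add x y hx hy ihx ihy =>
    intro B hB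
    have : (x + y) * B - B * (x + y) = (x * B - B * x) + (y * B - B * y) := by
      noncomm_ring
    rw [this]; exact p.add_mem (ihx B hB) (ihy B hB)
  | smul r x hx ihx =>
    intro B hB
    have : (r • x) * B - B * (r • x) = r • (x * B - B * x) := by
      rw [mul_smul_comm, smul_mul_assoc, smul_sub]
    rw [this]; exact p.smul_mem r (ihx B hB)

lemma sub_kron {l n : Type*} (A B : Matrix l l ℂ) (C : Matrix n n ℂ) :
    (A - B) ⊗ₖ C = A ⊗ₖ C - B ⊗ₖ C := by
  ext ⟨i, j⟩ ⟨k, l⟩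
  simp [Matrix.kroneckerMap_apply, sub_mul]

lemma σz_mul_σz : σz * σz = 1 := by
  simp [σz, Matrix.mul_fin_two, Matrix.one_fin_two]

theorem stmt12 (m : ℕ)
    (l0 l1 : Submodule ℝ (Matrix (Fin (2 ^ m) × Fin 2) (Fin (2 ^ m) × Fin 2) ℂ))
    (h0 : l0 = Submodule.span ℝ {M | ∃ c ∈ su (Fin (2 ^ m)), M = c ⊗ₖ σz})
    (h1 : l1 = Submodule.span ℝ
      {M | (∃ d ∈ su (Fin (2 ^ m)), M = d ⊗ₖ (1 : Matrix (Fin 2) (Fin 2) ℂ)) ∨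
           M = Complex.I • ((1 : Matrix (Fin (2 ^ m)) (Fin (2 ^ m)) ℂ) ⊗ₖ σz)}) :
    (∀ A ∈ l1, ∀ B ∈ l1, A * B - B * A ∈ l1) ∧
    (∀ A ∈ l0, ∀ B ∈ l1, A * B - B * A ∈ l0) ∧
    (∀ A ∈ l0, ∀ B ∈ l0, A * B - B * A ∈ l1) := by
  subst h0 h1
  refine ⟨comm_span _ _ _ ?_, comm_span _ _ _ ?_, comm_span _ _ _ ?_⟩
  · -- [l1, l1] ⊆ l1
    rintro a (⟨c, hc, rfl⟩ | rfl) b (⟨d, hd, rfl⟩ | rfl)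
    · rw [← Matrix.mul_kronecker_mul, ← Matrix.mul_kronecker_mul, one_mul,
        ← sub_kron]
      exact Submodule.subset_span (Or.inl ⟨_, su_comm hc hd, rfl⟩)
    · rw [Matrix.mul_smul, Matrix.smul_mul, ← Matrix.mul_kronecker_mul,
        ← Matrix.mul_kronecker_mul, one_mul, mul_one, one_mul, mul_one, sub_self]
      exact Submodule.zero_mem _
    · rw [Matrix.mul_smul, Matrix.smul_mul, ← Matrix.mul_kronecker_mul,
        ← Matrix.mul_kronecker_mul, one_mul, mul_one, one_mul, mul_one, sub_self]
      exact Submodule.zero_mem _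
    · rw [sub_self]; exact Submodule.zero_mem _
  · -- [l0, l1] ⊆ l0
    rintro a ⟨c, hc, rfl⟩ b (⟨d, hd, rfl⟩ | rfl)
    · rw [← Matrix.mul_kronecker_mul, ← Matrix.mul_kronecker_mul, one_mul, mul_one,
        ← sub_kron]
      exact Submodule.subset_span ⟨_, su_comm hc hd, rfl⟩
    · rw [Matrix.mul_smul, Matrix.smul_mul, ← Matrix.mul_kronecker_mul,
        ← Matrix.mul_kronecker_mul, one_mul, mul_one, sub_self]
      exact Submodule.zero_mem _
  · -- [l0, l0] ⊆ l1
    rintro a ⟨c, hc, rfl⟩ b ⟨d, hd, rfl⟩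
    rw [← Matrix.mul_kronecker_mul, ← Matrix.mul_kronecker_mul, σz_mul_σz,
      ← sub_kron]
    exact Submodule.subset_span (Or.inl ⟨_, su_comm hc hd, rfl⟩)
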